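/- Let N be a positive integer, let H be an N×N Hermitian complex matrix, and let v_1, v_2 ∈ ℂ^N satisfy H v_1 = e_1 v_1 and H v_2 = e_2 v_2 for real numbers e_1, e_2. Let ρ be any N×N complex matrix, let σ > 0, let g(t) = (2πσ²)^{−1/2}·exp(−t²/(2σ²)), and define ω := ∫_ℝ g(t) · exp(−itH) ρ exp(itH) dt (an entrywise Bochner integral, exp denoting the matrix exponential). Then ⟨v_1, ω v_2⟩ = exp(−σ²(e_1−e_2)²/2) · ⟨v_1, ρ v_2⟩, where ⟨·,·⟩ is the standard inner product on ℂ^N. -/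

import Mathlib

open scoped BigOperators Matrix

/-- The centered Gaussian probability density with variance `σ²`:
`g(t) = (2πσ²)^{-1/2} exp(-t²/(2σ²))`. -/
noncomputable def gaussDensity (σ t : ℝ) : ℝ :=
  (Real.sqrt (2 * Real.pi * σ ^ 2))⁻¹ * Real.exp (-t ^ 2 / (2 * σ ^ 2))

/-- The Gaussian time-average `ω = ∫ g(t) exp(-itH) ρ exp(itH) dt`, defined as an
entrywise Bochner integral (each entry is a `ℂ`-valued Bochner integral). -/
noncomputable def gaussTimeAverage {N : ℕ} (σ : ℝ) (H ρ : Matrix (Fin N) (Fin N) ℂ) :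
    Matrix (Fin N) (Fin N) ℂ :=
  Matrix.of fun i j => ∫ t : ℝ, (gaussDensity σ t : ℂ) *
    ((NormedSpace.exp ((-(Complex.I * (t : ℂ))) • H) * ρ *
        NormedSpace.exp ((Complex.I * (t : ℂ)) • H)) i j)

section Aux

open Complex MeasureTheory

attribute [local instance] Matrix.linftyOpNormedAddCommGroup Matrix.linftyOpNormedRing
  Matrix.linftyOpNormedAlgebra

variable {N : ℕ}

noncomputable def mulVecCLM (v : Fin N → ℂ) :
    Matrix (Fin N) (Fin N) ℂ →L[ℂ] (Fin N → ℂ) :=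
  LinearMap.toContinuousLinearMap
    { toFun := fun M => M.mulVec v
      map_add' := fun A B => Matrix.add_mulVec A B v
      map_smul' := fun c A => Matrix.smul_mulVec c A v }

lemma exp_mulVec (A : Matrix (Fin N) (Fin N) ℂ) (v : Fin N → ℂ) (μ : ℂ)
    (h : A.mulVec v = μ • v) :
    (NormedSpace.exp A).mulVec v = Complex.exp μ • v := by
  have hpow : ∀ n : ℕ, (A ^ n).mulVec v = μ ^ n • v := by
    intro n
    induction n with
    | zero => simp [Matrix.one_mulVec]
    | succ n ih =>
        rw [pow_succ, ← Matrix.mulVec_mulVec, h, Matrix.mulVec_smul, ih, smul_smul,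
          pow_succ, mul_comm]
  have hsum : Summable fun n : ℕ => ((n.factorial : ℂ))⁻¹ • A ^ n :=
    NormedSpace.expSeries_summable' (𝕂 := ℂ) A
  have key : (NormedSpace.exp A).mulVec v
      = ∑' n : ℕ, ((n.factorial : ℂ))⁻¹ • ((A ^ n).mulVec v) := by
    rw [NormedSpace.exp_eq_tsum ℂ]
    have := (mulVecCLM v).map_tsum hsum
    simpa [mulVecCLM, LinearMap.toContinuousLinearMap, Matrix.smul_mulVec] using this
  rw [key]
  have : ∀ n : ℕ, ((n.factorial : ℂ))⁻¹ • ((A ^ n).mulVec v)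
      = (((n.factorial : ℂ))⁻¹ * μ ^ n) • v := by
    intro n; rw [hpow n, smul_smul]
  simp_rw [this]
  rw [Summable.tsum_smul_const]
  · congr 1
    rw [Complex.exp_eq_exp_ℂ, NormedSpace.exp_eq_tsum ℂ]
    simp [smul_eq_mul]
  · have := NormedSpace.expSeries_summable' (𝕂 := ℂ) μ
    simpa [smul_eq_mul] using this

lemma exp_unitary (H : Matrix (Fin N) (Fin N) ℂ) (hH : H.IsHermitian) (t : ℝ) :
    (NormedSpace.exp ((-(Complex.I * (t : ℂ))) • H)) *
      (NormedSpace.exp ((-(Complex.I * (t : ℂ))) • H))ᴴ = 1 := by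
  have hct : ((-(Complex.I * (t : ℂ))) • H)ᴴ = (Complex.I * (t : ℂ)) • H := by
    rw [Matrix.conjTranspose_smul, hH.eq]
    congr 1
    simp [Complex.ext_iff]
  rw [← Matrix.exp_conjTranspose, hct, ← Matrix.exp_add_of_commute]
  · simp
  · exact ((Commute.refl H).smul_left _).smul_right _

lemma entry_abs_le_one {U : Matrix (Fin N) (Fin N) ℂ} (hU : U * Uᴴ = 1) (i j : Fin N) :
    ‖U i j‖ ≤ 1 := by
  have h : ∑ k, Complex.normSq (U i k) = 1 := by
    have h1 := congrFun (congrFun hU i) i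
    simp only [Matrix.mul_apply, Matrix.conjTranspose_apply, Matrix.one_apply_eq] at h1
    have : ((∑ k, Complex.normSq (U i k) : ℝ) : ℂ) = 1 := by
      push_cast
      rw [← h1]
      congr 1; ext k
      rw [RCLike.star_def, Complex.mul_conj]
    exact_mod_cast this
  have hle : Complex.normSq (U i j) ≤ 1 := by
    rw [← h]
    exact Finset.single_le_sum (fun k _ => Complex.normSq_nonneg _) (Finset.mem_univ j)
  have := Complex.sq_norm (U i j)
  nlinarith [norm_nonneg (U i j)]

lemma integrable_gaussDensity {σ : ℝ} (hσ : 0 < σ) : Integrable (gaussDensity σ) := by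
  unfold gaussDensity
  apply Integrable.const_mul
  have hb : 0 < (2 * σ ^ 2)⁻¹ := by positivity
  have := integrable_exp_neg_mul_sq hb
  refine this.congr ?_
  · filter_upwards with x
    congr 1
    field_simp

lemma continuous_entry (H ρ : Matrix (Fin N) (Fin N) ℂ) (i j : Fin N) :
    Continuous (fun t : ℝ =>
      (NormedSpace.exp ((-(Complex.I * (t : ℂ))) • H) * ρ *
        NormedSpace.exp ((Complex.I * (t : ℂ)) • H)) i j) := by
  apply Continuous.matrix_elem
  apply Continuous.matrix_mul
  · apply Continuous.matrix_mul
    · exact NormedSpace.exp_continuous.comp (by continuity)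
    · exact continuous_const
  · exact NormedSpace.exp_continuous.comp (by continuity)

lemma integrable_entry (H ρ : Matrix (Fin N) (Fin N) ℂ) (hH : H.IsHermitian)
    {σ : ℝ} (hσ : 0 < σ) (i j : Fin N) :
    Integrable (fun t : ℝ => (gaussDensity σ t : ℂ) *
      ((NormedSpace.exp ((-(Complex.I * (t : ℂ))) • H) * ρ *
        NormedSpace.exp ((Complex.I * (t : ℂ)) • H)) i j)) := by
  have hg : Integrable (fun t : ℝ => (gaussDensity σ t : ℂ)) :=
    (integrable_gaussDensity hσ).ofReal
  refine (hg.bdd_mul (c := ∑ k, ∑ l, ‖ρ k l‖) ((continuous_entry H ρ i j).aestronglyMeasurable)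
    (ae_of_all _ fun t => ?_)).congr
    (by filter_upwards with t; ring)
  set U := NormedSpace.exp ((-(Complex.I * (t : ℂ))) • H) with hUdef
  set V := NormedSpace.exp ((Complex.I * (t : ℂ)) • H) with hVdef
  have hU : U * Uᴴ = 1 := exp_unitary H hH t
  have hV : V * Vᴴ = 1 := by
    have := exp_unitary H hH (-t)
    simpa [hVdef, Complex.ofReal_neg, mul_neg, neg_neg] using this
  have hentry : (U * ρ * V) i j = ∑ k, ∑ l, U i k * ρ k l * V l j := by
    simp only [Matrix.mul_apply, Finset.sum_mul]
    rw [Finset.sum_comm]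
  rw [show ‖(U * ρ * V) i j‖ = ‖(U * ρ * V) i j‖ from rfl, hentry]
  calc ‖∑ k, ∑ l, U i k * ρ k l * V l j‖
      ≤ ∑ k, ∑ l, ‖U i k * ρ k l * V l j‖ := by
        refine (norm_sum_le _ _).trans ?_
        exact Finset.sum_le_sum fun k _ => norm_sum_le _ _
    _ ≤ ∑ k, ∑ l, ‖ρ k l‖ := by
        refine Finset.sum_le_sum fun k _ => Finset.sum_le_sum fun l _ => ?_
        rw [norm_mul, norm_mul]
        calc ‖U i k‖ * ‖ρ k l‖ * ‖V l j‖
            ≤ 1 * ‖ρ k l‖ * 1 := by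
              gcongr
              · exact entry_abs_le_one hU i k
              · exact entry_abs_le_one hV l j
          _ = ‖ρ k l‖ := by ring

lemma pointwise_inner (H ρ : Matrix (Fin N) (Fin N) ℂ) (hH : H.IsHermitian)
    (v₁ v₂ : Fin N → ℂ) (e₁ e₂ : ℝ)
    (hv₁ : H.mulVec v₁ = (e₁ : ℂ) • v₁) (hv₂ : H.mulVec v₂ = (e₂ : ℂ) • v₂) (t : ℝ) :
    star v₁ ⬝ᵥ ((NormedSpace.exp ((-(Complex.I * (t : ℂ))) • H) * ρ *
        NormedSpace.exp ((Complex.I * (t : ℂ)) • H)).mulVec v₂)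
      = Complex.exp (Complex.I * t * ((e₂ : ℂ) - e₁)) * (star v₁ ⬝ᵥ ρ.mulVec v₂) := by
  set U := NormedSpace.exp ((-(Complex.I * (t : ℂ))) • H) with hUdef
  set V := NormedSpace.exp ((Complex.I * (t : ℂ)) • H) with hVdef
  have hVv₂ : V.mulVec v₂ = Complex.exp (Complex.I * t * e₂) • v₂ := by
    apply exp_mulVec
    rw [Matrix.smul_mulVec, hv₂, smul_smul]
  have hUH : Uᴴ = V := by
    rw [hUdef, hVdef, ← Matrix.exp_conjTranspose, Matrix.conjTranspose_smul, hH.eq]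
    congr 2
    simp [Complex.ext_iff]
  have hUv₁ : Uᴴ.mulVec v₁ = Complex.exp (Complex.I * t * e₁) • v₁ := by
    rw [hUH]
    apply exp_mulVec
    rw [Matrix.smul_mulVec, hv₁, smul_smul]
  have hleft : ∀ w : Fin N → ℂ, star v₁ ⬝ᵥ U.mulVec w
      = Complex.exp (-(Complex.I * t * e₁)) * (star v₁ ⬝ᵥ w) := by
    intro w
    rw [Matrix.dotProduct_mulVec]
    have : Matrix.vecMul (star v₁) U = star (Uᴴ.mulVec v₁) := by
      rw [Matrix.star_mulVec, Matrix.conjTranspose_conjTranspose]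
    rw [this, hUv₁, star_smul, smul_dotProduct]
    congr 1
    rw [RCLike.star_def, ← Complex.exp_conj]
    congr 1
    simp [Complex.ext_iff]
  have h1 : (U * ρ * V).mulVec v₂
      = Complex.exp (Complex.I * t * e₂) • (U.mulVec (ρ.mulVec v₂)) := by
    rw [← Matrix.mulVec_mulVec, ← Matrix.mulVec_mulVec, hVv₂, Matrix.mulVec_smul,
      Matrix.mulVec_smul]
  rw [h1, dotProduct_smul, smul_eq_mul, hleft, ← mul_assoc, ← Complex.exp_add]
  congr 2
  ring

lemma gauss_integral (σ : ℝ) (hσ : 0 < σ) (a : ℝ) :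
    ∫ t : ℝ, (gaussDensity σ t : ℂ) * Complex.exp (Complex.I * t * a)
      = Complex.exp (-((σ : ℂ) ^ 2 * a ^ 2) / 2) := by
  have hb : (0 : ℝ) < ((1 : ℂ) / (2 * σ ^ 2)).re := by
    simp only [one_div]
    rw [show ((2 : ℂ) * σ ^ 2) = ((2 * σ ^ 2 : ℝ) : ℂ) by push_cast; ring]
    rw [← Complex.ofReal_inv, Complex.ofReal_re]
    positivity
  have key := fourierIntegral_gaussian hb (a : ℂ)
  have hpt : ∀ t : ℝ, (gaussDensity σ t : ℂ) * Complex.exp (Complex.I * t * a)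
      = ((Real.sqrt (2 * Real.pi * σ ^ 2))⁻¹ : ℝ) *
        (Complex.exp (Complex.I * a * t) * Complex.exp (-(1 / (2 * σ ^ 2)) * t ^ 2)) := by
    intro t
    unfold gaussDensity
    push_cast
    rw [mul_assoc, mul_assoc, ← Complex.exp_add, ← Complex.exp_add]
    congr 2
    ring
  simp_rw [hpt]
  rw [MeasureTheory.integral_const_mul, key]
  have hsq : ((Real.pi : ℂ) / (1 / (2 * σ ^ 2))) ^ (1 / 2 : ℂ)
      = (Real.sqrt (2 * Real.pi * σ ^ 2) : ℂ) := by
    have h1 : ((Real.pi : ℂ) / (1 / (2 * σ ^ 2))) = ((2 * Real.pi * σ ^ 2 : ℝ) : ℂ) := by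
      push_cast
      field_simp
    rw [h1]
    have h2 : (0 : ℝ) ≤ 2 * Real.pi * σ ^ 2 := by positivity
    rw [show ((1:ℂ)/2) = ((1/2 : ℝ) : ℂ) by norm_num, ← Complex.ofReal_cpow h2]
    norm_num [← Real.sqrt_eq_rpow]
  rw [hsq]
  have h3 : (Real.sqrt (2 * Real.pi * σ ^ 2) : ℂ) ≠ 0 := by
    simp only [ne_eq, Complex.ofReal_eq_zero]
    positivity
  rw [← mul_assoc]
  rw [show ((Real.sqrt (2 * Real.pi * σ ^ 2))⁻¹ : ℝ) = ((Real.sqrt (2 * Real.pi * σ ^ 2) : ℂ))⁻¹ by push_cast; ring]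
  rw [inv_mul_cancel₀ h3, one_mul]
  congr 1
  field_simp
  ring
end Aux

/-- **Off-diagonal damping identity** from the proof of Theorem `TheWeakLocalDiagonality`:
if `H v₁ = e₁ v₁` and `H v₂ = e₂ v₂` for a Hermitian matrix `H`, then the Gaussian
time-average `ω` of any matrix `ρ` satisfies
`⟨v₁, ω v₂⟩ = exp(-σ²(e₁-e₂)²/2) ⟨v₁, ρ v₂⟩`. -/
theorem gaussTimeAverage_inner_eigenvectors
    (N : ℕ) (hN : 0 < N) (H ρ : Matrix (Fin N) (Fin N) ℂ) (hH : H.IsHermitian)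
    (v₁ v₂ : Fin N → ℂ) (e₁ e₂ : ℝ)
    (hv₁ : H.mulVec v₁ = (e₁ : ℂ) • v₁) (hv₂ : H.mulVec v₂ = (e₂ : ℂ) • v₂)
    (σ : ℝ) (hσ : 0 < σ) :
    star v₁ ⬝ᵥ (gaussTimeAverage σ H ρ).mulVec v₂
      = (Real.exp (-(σ ^ 2 * (e₁ - e₂) ^ 2) / 2) : ℂ) * (star v₁ ⬝ᵥ ρ.mulVec v₂) := by
  classical
  set M : ℝ → Matrix (Fin N) (Fin N) ℂ := fun t =>
    NormedSpace.exp ((-(Complex.I * (t : ℂ))) • H) * ρ *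
      NormedSpace.exp ((Complex.I * (t : ℂ)) • H) with hM
  have hint : ∀ i j, MeasureTheory.Integrable
      (fun t : ℝ => (gaussDensity σ t : ℂ) * (M t) i j) :=
    fun i j => integrable_entry H ρ hH hσ i j
  have expand : star v₁ ⬝ᵥ (gaussTimeAverage σ H ρ).mulVec v₂
      = ∑ i, ∑ j, star v₁ i *
          ((∫ t : ℝ, (gaussDensity σ t : ℂ) * (M t) i j) * v₂ j) := by
    simp only [gaussTimeAverage, dotProduct, Matrix.mulVec, Matrix.of_apply,
      Finset.mul_sum, hM]
  rw [expand]
  have step1 : ∀ i j, star v₁ i *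
        ((∫ t : ℝ, (gaussDensity σ t : ℂ) * (M t) i j) * v₂ j)
      = ∫ t : ℝ, star v₁ i * (((gaussDensity σ t : ℂ) * (M t) i j) * v₂ j) := by
    intro i j
    rw [← MeasureTheory.integral_mul_const, ← MeasureTheory.integral_const_mul]
  simp_rw [step1]
  have intb : ∀ i j, MeasureTheory.Integrable (fun t : ℝ =>
      star v₁ i * (((gaussDensity σ t : ℂ) * (M t) i j) * v₂ j)) :=
    fun i j => ((hint i j).mul_const (v₂ j)).const_mul (star v₁ i)
  have h1 : ∀ i : Fin N, ∑ j, ∫ t : ℝ,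
        star v₁ i * (((gaussDensity σ t : ℂ) * (M t) i j) * v₂ j)
      = ∫ t : ℝ, ∑ j, star v₁ i * (((gaussDensity σ t : ℂ) * (M t) i j) * v₂ j) :=
    fun i => (MeasureTheory.integral_finset_sum _ (fun j _ => intb i j)).symm
  simp_rw [h1]
  rw [← MeasureTheory.integral_finset_sum _ (fun i _ =>
    MeasureTheory.integrable_finset_sum _ (fun j _ => intb i j))]
  have h2 : ∀ t : ℝ, ∑ i, ∑ j, star v₁ i * (((gaussDensity σ t : ℂ) * (M t) i j) * v₂ j)
      = (gaussDensity σ t : ℂ) * (star v₁ ⬝ᵥ (M t).mulVec v₂) := by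
    intro t
    simp only [dotProduct, Matrix.mulVec, Finset.mul_sum]
    exact Finset.sum_congr rfl fun i _ => Finset.sum_congr rfl fun j _ => by ring
  simp_rw [h2, hM]
  have h3 : ∀ t : ℝ, (gaussDensity σ t : ℂ) *
        (star v₁ ⬝ᵥ ((NormedSpace.exp ((-(Complex.I * (t : ℂ))) • H) * ρ *
          NormedSpace.exp ((Complex.I * (t : ℂ)) • H)).mulVec v₂))
      = ((gaussDensity σ t : ℂ) *
          Complex.exp (Complex.I * t * ((e₂ - e₁ : ℝ) : ℂ))) * (star v₁ ⬝ᵥ ρ.mulVec v₂) := by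
    intro t
    rw [pointwise_inner H ρ hH v₁ v₂ e₁ e₂ hv₁ hv₂ t]
    push_cast
    ring
  simp_rw [h3]
  rw [MeasureTheory.integral_mul_const, gauss_integral σ hσ (e₂ - e₁)]
  congr 1
  rw [Complex.ofReal_exp]
  congr 1
  push_cast
  ring
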